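/- The double integral ∫₀^{π/2} sin(x) · (∫ₓ^{π/2} 1/sin(t) dt) dx equals ln 2. -/

import Mathlib

open Real MeasureTheory Set Filter Topology intervalIntegral

private lemma half_pos_lt {t : ℝ} (h1 : 0 < t) (h2 : t ≤ π/2) :
    0 < Real.sin (t/2) ∧ 0 < Real.cos (t/2) := by
  constructor
  · exact Real.sin_pos_of_pos_of_lt_pi (by linarith) (by nlinarith [Real.pi_pos])
  · exact Real.cos_pos_of_mem_Ioo ⟨by linarith [Real.pi_pos], by linarith [Real.pi_pos]⟩

private lemma inner_int {x : ℝ} (hx : 0 < x) (hx' : x ≤ π/2) :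
    ∫ t in x..(π/2), 1 / Real.sin t
      = Real.log (Real.cos (x/2)) - Real.log (Real.sin (x/2)) := by
  have key := intervalIntegral.integral_eq_sub_of_hasDerivAt
      (f := fun t => Real.log (Real.sin (t/2)) - Real.log (Real.cos (t/2)))
      (f' := fun t => 1 / Real.sin t) (a := x) (b := π/2)
      ?_ ?_
  · rw [key]
    have h4 : (π/2)/2 = π/4 := by ring
    rw [h4, Real.sin_pi_div_four, Real.cos_pi_div_four]
    ring
  · intro t ht
    rw [uIcc_of_le hx'] at ht
    obtain ⟨hs, hc⟩ := half_pos_lt (lt_of_lt_of_le hx ht.1) ht.2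
    have h2 : HasDerivAt (fun y : ℝ => y/2) (1/2) t := (hasDerivAt_id t).div_const 2
    have hsd : HasDerivAt (fun y : ℝ => Real.sin (y/2)) (Real.cos (t/2) * (1/2)) t :=
      by have := (Real.hasDerivAt_sin (t/2)).comp t h2; exact this
    have hcd : HasDerivAt (fun y : ℝ => Real.cos (y/2)) (-Real.sin (t/2) * (1/2)) t :=
      by have := (Real.hasDerivAt_cos (t/2)).comp t h2; exact this
    have := (hsd.log hs.ne').sub (hcd.log hc.ne')
    convert this using 1
    · rfl
    have hst : Real.sin t = 2 * Real.sin (t/2) * Real.cos (t/2) := by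
      rw [show t = 2 * (t/2) by ring, Real.sin_two_mul]
      ring_nf
    rw [hst]
    have h1 : Real.sin (t/2)^2 + Real.cos (t/2)^2 = 1 := Real.sin_sq_add_cos_sq _
    field_simp
    linear_combination (-1) * h1
  · apply ContinuousOn.intervalIntegrable
    apply ContinuousOn.div continuousOn_const Real.continuous_sin.continuousOn
    intro t ht
    rw [uIcc_of_le hx'] at ht
    exact (Real.sin_pos_of_pos_of_lt_pi (lt_of_lt_of_le hx ht.1)
      (by nlinarith [Real.pi_pos, ht.2])).ne'

noncomputable def Haux (x : ℝ) : ℝ :=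
  2 * Real.sin (x/2)^2 * (Real.log (Real.cos (x/2)) - Real.log (Real.sin (x/2)))
    - 2 * Real.log (Real.cos (x/2))

private lemma Haux_deriv {x : ℝ} (hx : 0 < x) (hx' : x < π/2) :
    HasDerivAt Haux
      (Real.sin x * (Real.log (Real.cos (x/2)) - Real.log (Real.sin (x/2)))) x := by
  obtain ⟨hs, hc⟩ := half_pos_lt hx hx'.le
  have h2 : HasDerivAt (fun y : ℝ => y/2) (1/2) x := (hasDerivAt_id x).div_const 2
  have hsd : HasDerivAt (fun y : ℝ => Real.sin (y/2)) (Real.cos (x/2) * (1/2)) x :=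
    by have := (Real.hasDerivAt_sin (x/2)).comp x h2; exact this
  have hcd : HasDerivAt (fun y : ℝ => Real.cos (y/2)) (-Real.sin (x/2) * (1/2)) x :=
    by have := (Real.hasDerivAt_cos (x/2)).comp x h2; exact this
  have hs2 : HasDerivAt (fun y : ℝ => 2 * Real.sin (y/2)^2)
      (2 * ((2 : ℕ) * Real.sin (x/2)^1 * (Real.cos (x/2) * (1/2)))) x :=
    (hsd.pow 2).const_mul 2
  have hL : HasDerivAt (fun y : ℝ => Real.log (Real.cos (y/2)) - Real.log (Real.sin (y/2)))
      ((-Real.sin (x/2) * (1/2)) / Real.cos (x/2) - (Real.cos (x/2) * (1/2)) / Real.sin (x/2)) x :=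
    (hcd.log hc.ne').sub (hsd.log hs.ne')
  have hfull := (hs2.mul hL).sub ((hcd.log hc.ne').const_mul 2)
  convert hfull using 1
  · rfl
  · rfl
  · rfl
  have hst : Real.sin x = 2 * Real.sin (x/2) * Real.cos (x/2) := by
    rw [show x = 2 * (x/2) by ring, Real.sin_two_mul]; ring_nf
  rw [hst]
  have h1 : Real.sin (x/2)^2 + Real.cos (x/2)^2 = 1 := Real.sin_sq_add_cos_sq _
  field_simp
  linear_combination h1

private lemma sin_half_tendsto : Tendsto (fun x : ℝ => Real.sin (x/2)) (𝓝[>] 0) (𝓝[>] 0) := by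
  rw [tendsto_nhdsWithin_iff]
  constructor
  · have : ContinuousAt (fun x : ℝ => Real.sin (x/2)) 0 := by fun_prop
    simpa using this.tendsto.mono_left nhdsWithin_le_nhds
  · filter_upwards [Ioo_mem_nhdsGT_of_mem (⟨le_refl (0:ℝ), Real.pi_pos⟩ : (0:ℝ) ∈ Ico 0 π)]
      with x hx
    exact Real.sin_pos_of_pos_of_lt_pi (by linarith [hx.1]) (by linarith [hx.2, Real.pi_pos])

private lemma Haux_tendsto_zero : Tendsto Haux (𝓝[>] 0) (𝓝 0) := by
  have tB : Tendsto (fun x : ℝ => Real.log (Real.sin (x/2)) * Real.sin (x/2)^2)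
      (𝓝[>] 0) (𝓝 0) := by
    have := (tendsto_log_mul_rpow_nhdsGT_zero (r := 2) two_pos).comp sin_half_tendsto
    simpa [Function.comp_def, Real.rpow_natCast] using this
  have tA : Tendsto (fun x : ℝ => 2 * Real.sin (x/2)^2 * Real.log (Real.cos (x/2)))
      (𝓝[>] 0) (𝓝 0) := by
    have hC : ContinuousAt (fun x : ℝ => 2 * Real.sin (x/2)^2 * Real.log (Real.cos (x/2))) 0 := by
      apply ContinuousAt.mul (by fun_prop)
      exact (Real.continuousAt_log (by simp)).comp (by fun_prop)
    simpa using hC.tendsto.mono_left nhdsWithin_le_nhds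
  have tC : Tendsto (fun x : ℝ => 2 * Real.log (Real.cos (x/2))) (𝓝[>] 0) (𝓝 0) := by
    have hC : ContinuousAt (fun x : ℝ => 2 * Real.log (Real.cos (x/2))) 0 := by
      apply ContinuousAt.mul continuousAt_const
      exact (Real.continuousAt_log (by simp)).comp (by fun_prop)
    simpa using hC.tendsto.mono_left nhdsWithin_le_nhds
  have := (tA.sub (tB.const_mul 2)).sub tC
  simp only [sub_zero, mul_zero, zero_sub, neg_zero] at this
  refine this.congr (fun x => ?_)
  unfold Haux; ring

private lemma Haux_cont : ContinuousOn Haux (Icc 0 (π/2)) := by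
  intro x hx
  rcases eq_or_lt_of_le hx.1 with h | h
  · subst h
    rw [← continuousWithinAt_diff_self]
    have h0 : Haux 0 = 0 := by simp [Haux]
    have : Tendsto Haux (𝓝[Icc 0 (π/2) \ {0}] 0) (𝓝 (Haux 0)) := by
      rw [h0]
      apply Haux_tendsto_zero.mono_left
      apply nhdsWithin_mono
      rintro y ⟨hy1, hy2⟩
      exact lt_of_le_of_ne hy1.1 (Ne.symm hy2)
    exact this
  · obtain ⟨hs, hc⟩ := half_pos_lt h hx.2
    have hcc : ContinuousAt (fun y : ℝ => Real.cos (y/2)) x := by fun_prop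
    have hss : ContinuousAt (fun y : ℝ => Real.sin (y/2)) x := by fun_prop
    have hlc : ContinuousAt (fun y : ℝ => Real.log (Real.cos (y/2))) x :=
      hcc.log hc.ne'
    have hls : ContinuousAt (fun y : ℝ => Real.log (Real.sin (y/2))) x :=
      hss.log hs.ne'
    exact ContinuousAt.continuousWithinAt
      ((((hss.pow 2).const_mul 2).mul (hlc.sub hls)).sub (hlc.const_mul 2))

private lemma Haux_pi_div_two : Haux (π/2) = Real.log 2 := by
  unfold Haux
  rw [show (π/2)/2 = π/4 by ring, Real.sin_pi_div_four, Real.cos_pi_div_four]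
  rw [show Real.sqrt 2 / 2 = Real.sqrt 2 / 2 from rfl]
  have h : Real.log (Real.sqrt 2 / 2) = Real.log 2 / 2 - Real.log 2 := by
    rw [Real.log_div (by positivity) (by norm_num), Real.log_sqrt (by norm_num)]
  rw [h]; ring

theorem double_integral_eq_log_two :
    ∫ x in (0:ℝ)..(π/2), Real.sin x * ∫ t in x..(π/2), 1 / Real.sin t = Real.log 2 := by
  have hEq : EqOn (fun x => Real.sin x * ∫ t in x..(π/2), 1 / Real.sin t)
      (fun x => Real.sin x * (Real.log (Real.cos (x/2)) - Real.log (Real.sin (x/2))))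
      (uIcc 0 (π/2)) := by
    intro x hx
    rw [uIcc_of_le (by positivity)] at hx
    rcases eq_or_lt_of_le hx.1 with h | h
    · simp [← h]
    · simp only
      rw [inner_int h hx.2]
  rw [intervalIntegral.integral_congr hEq]
  have hderiv : ∀ x ∈ Ioo (0:ℝ) (π/2), HasDerivAt Haux
      (Real.sin x * (Real.log (Real.cos (x/2)) - Real.log (Real.sin (x/2)))) x :=
    fun x hx => Haux_deriv hx.1 hx.2
  have hint : IntervalIntegrable
      (fun x => Real.sin x * (Real.log (Real.cos (x/2)) - Real.log (Real.sin (x/2))))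
      volume 0 (π/2) := by
    apply intervalIntegral.intervalIntegrable_deriv_of_nonneg (g := Haux)
    · rw [uIcc_of_le (by positivity)]; exact Haux_cont
    · rw [min_eq_left (by positivity), max_eq_right (by positivity)]; exact hderiv
    · rw [min_eq_left (by positivity), max_eq_right (by positivity)]
      intro x hx
      obtain ⟨hs, hc⟩ := half_pos_lt hx.1 hx.2.le
      have hsx : 0 ≤ Real.sin x :=
        (Real.sin_pos_of_pos_of_lt_pi hx.1 (by nlinarith [Real.pi_pos, hx.2])).le
      have hsc : Real.sin (x/2) ≤ Real.cos (x/2) := by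
        rw [← Real.sin_pi_div_two_sub]
        apply Real.strictMonoOn_sin.monotoneOn
          ⟨by linarith [hx.1, hx.2, Real.pi_pos], by linarith [hx.1, hx.2, Real.pi_pos]⟩
          ⟨by linarith [hx.1, hx.2, Real.pi_pos], by linarith [hx.1, hx.2, Real.pi_pos]⟩
        linarith [hx.2]
      exact mul_nonneg hsx (sub_nonneg.2 (Real.log_le_log hs hsc))
  have h0 : Tendsto Haux (𝓝[>] (0:ℝ)) (𝓝 0) := Haux_tendsto_zero
  have hb : Tendsto Haux (𝓝[<] (π/2)) (𝓝 (Real.log 2)) := by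
    rw [← Haux_pi_div_two]
    obtain ⟨hs, hc⟩ := half_pos_lt (by positivity) (le_refl (π/2))
    have hcc : ContinuousAt (fun y : ℝ => Real.cos (y/2)) (π/2) := by fun_prop
    have hss : ContinuousAt (fun y : ℝ => Real.sin (y/2)) (π/2) := by fun_prop
    have hlc : ContinuousAt (fun y : ℝ => Real.log (Real.cos (y/2))) (π/2) :=
      hcc.log hc.ne'
    have hls : ContinuousAt (fun y : ℝ => Real.log (Real.sin (y/2))) (π/2) :=
      hss.log hs.ne'
    have : ContinuousAt Haux (π/2) :=
      (((hss.pow 2).const_mul 2).mul (hlc.sub hls)).sub (hlc.const_mul 2)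
    exact this.tendsto.mono_left nhdsWithin_le_nhds
  rw [intervalIntegral.integral_eq_sub_of_hasDerivAt_of_tendsto (by positivity) hderiv hint h0 hb]
  ring
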